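/- The trace monoid M(Σ,θ) splits as a product M(Σ,θ) = L · M(B,θ_B), where L is the submonoid of traces whose terminal alphabet is contained in Σ\B; i.e., every trace t ∈ M(Σ,θ) can be written as t = l·m with l ∈ L and m ∈ M(B,θ_B). -/

import Mathlib

/-- The relation `ab ~ ba` for commuting pairs `(a,b) ∈ θ`. -/
def traceRel {α : Type} (θ : α → α → Prop) : FreeMonoid α → FreeMonoid α → Prop :=
  fun u v => ∃ a b, θ a b ∧ u = FreeMonoid.of a * FreeMonoid.of b ∧
    v = FreeMonoid.of b * FreeMonoid.of a

/-- The trace congruence generated by `ab ~ ba` for `(a,b) ∈ θ`. -/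
def traceCon {α : Type} (θ : α → α → Prop) : Con (FreeMonoid α) := conGen (traceRel θ)

/-- The trace monoid `M(Σ,θ)`. -/
abbrev TraceMonoid {α : Type} (θ : α → α → Prop) := (traceCon θ).Quotient

/-- The canonical surjection `φ : Σ* → M(Σ,θ)`. -/
def phi {α : Type} (θ : α → α → Prop) : FreeMonoid α →* TraceMonoid θ := (traceCon θ).mk'

/-- The terminal alphabet of a trace. -/
def TA {α : Type} (θ : α → α → Prop) (t : TraceMonoid θ) : Set α :=
  {x | ∃ u : TraceMonoid θ, t = u * phi θ (FreeMonoid.of x)}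

/-- The left Lazard factor: traces whose terminal alphabet avoids `B`. -/
def leftFactor {α : Type} (θ : α → α → Prop) (B : Set α) : Set (TraceMonoid θ) :=
  {t | TA θ t ∩ B = ∅}

/-- The submonoid of `M(Σ,θ)` generated by the letters of `B`,
identified with `M(B,θ_B)`. -/
def subTrace {α : Type} (θ : α → α → Prop) (B : Set α) : Submonoid (TraceMonoid θ) :=
  Submonoid.closure ((fun x => phi θ (FreeMonoid.of x)) '' B)


/-- Length descends to the trace monoid. -/
def lenHom {α : Type} (θ : α → α → Prop) : TraceMonoid θ →* Multiplicative ℕ :=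
  Con.lift _ (FreeMonoid.lift (fun _ => Multiplicative.ofAdd 1)) (by
    refine Con.conGen_le.2 ?_
    rintro u v ⟨a, b, -, rfl, rfl⟩
    simp [Con.ker_rel, mul_comm])

noncomputable def tlen {α : Type} (θ : α → α → Prop) (t : TraceMonoid θ) : ℕ :=
  Multiplicative.toAdd (lenHom θ t)

lemma tlen_mul {α : Type} (θ : α → α → Prop) (u v : TraceMonoid θ) :
    tlen θ (u * v) = tlen θ u + tlen θ v := by
  simp [tlen, map_mul]

lemma tlen_of {α : Type} (θ : α → α → Prop) (x : α) :
    tlen θ (phi θ (FreeMonoid.of x)) = 1 := by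
  simp [tlen, lenHom, phi, Con.lift_mk']
  rfl

/-- Lazard bisection, existence: every trace factors as `l·m`
with `l ∈ L` and `m ∈ M(B,θ_B)`. -/
theorem lazard_bisection_exists {α : Type} [Fintype α] (θ : α → α → Prop)
    (hrefl : ∀ x, θ x x) (hsymm : ∀ x y, θ x y → θ y x) (B : Set α)
    (t : TraceMonoid θ) :
    ∃ l m : TraceMonoid θ, l ∈ leftFactor θ B ∧ m ∈ subTrace θ B ∧ t = l * m := by
  suffices H : ∀ n (t : TraceMonoid θ), tlen θ t = n →
      ∃ l m : TraceMonoid θ, l ∈ leftFactor θ B ∧ m ∈ subTrace θ B ∧ t = l * m from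
    H _ t rfl
  intro n
  induction n using Nat.strong_induction_on with
  | _ n IH =>
    intro t ht
    by_cases hTA : TA θ t ∩ B = ∅
    · exact ⟨t, 1, hTA, one_mem _, (mul_one t).symm⟩
    · obtain ⟨x, hxTA, hxB⟩ := Set.nonempty_iff_ne_empty.2 hTA
      obtain ⟨u, hu⟩ := hxTA
      have hlen : tlen θ u + 1 = n := by
        rw [← ht, hu, tlen_mul, tlen_of]
      obtain ⟨l, m, hl, hm, rfl⟩ := IH (tlen θ u) (by omega) u rfl
      exact ⟨l, m * phi θ (FreeMonoid.of x), hl,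
        mul_mem hm (Submonoid.subset_closure ⟨x, hxB, rfl⟩),
        by rw [hu, mul_assoc]⟩
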